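/- arXiv:1703.02728 — 3 statements merged into one kernel-verified Lean document; each statement's English description precedes it below -/
import Mathlib

section
/- If Ŷ ∈ {±1}^W is a minimizer of ∑_{uv∈E(W)} 1{Ŷ_u Ŷ_v ≠ X_{uv}} and S is a connected component of the set of vertices where Ŷ disagrees with ground truth Y (assuming Ŷ ≠ ±Y), then the number of edges (u,v) ∈ δ(S) with X_{uv} ≠ Y_u Y_v is at least ⌈|δ(S)|/2⌉. -/
open Finset

/-- The product label `Y_u Y_v` of an unordered edge. -/
def edgeLabel {V : Type*} (Y : V → ℤˣ) : Sym2 V → ℤˣ :=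
  Sym2.lift ⟨fun u v => Y u * Y v, fun _ _ => mul_comm _ _⟩

/-- Number of edges of `G` violated by the labeling `Yh` given edge observations `X`. -/
def edgeCost {V : Type*} [Fintype V] [DecidableEq V] (G : SimpleGraph V)
    [DecidableRel G.Adj] (Yh : V → ℤˣ) (X : Sym2 V → ℤˣ) : ℕ :=
  (G.edgeFinset.filter (fun e => edgeLabel Yh e ≠ X e)).card

/-- Size of the edge boundary `δ(S)`, counted as ordered pairs `(u,v)` with `u ∈ S`,
`v ∉ S`, `u ~ v`. -/
def bdry {V : Type*} [Fintype V] [DecidableEq V] (G : SimpleGraph V)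
    [DecidableRel G.Adj] (S : Finset V) : ℕ :=
  (Finset.univ.filter (fun pr : V × V => G.Adj pr.1 pr.2 ∧ pr.1 ∈ S ∧ pr.2 ∉ S)).card

lemma units_ne_neg_iff (a b : ℤˣ) : a ≠ -b ↔ a = b := by
  rcases Int.units_eq_one_or a with h | h <;> rcases Int.units_eq_one_or b with h' | h' <;>
    subst h <;> subst h' <;> decide

lemma pair_card {V : Type*} [Fintype V] [DecidableEq V] (G : SimpleGraph V)
    [DecidableRel G.Adj] (S : Finset V) (Q : Sym2 V → Prop) [DecidablePred Q] :
    (Finset.univ.filter (fun pr : V × V =>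
        G.Adj pr.1 pr.2 ∧ pr.1 ∈ S ∧ pr.2 ∉ S ∧ Q s(pr.1, pr.2))).card
      = ((G.edgeFinset.filter (fun e => (∃ u v, e = s(u,v) ∧ u ∈ S ∧ v ∉ S))).filter Q).card := by
  classical
  apply Finset.card_bij (fun pr _ => s(pr.1, pr.2))
  · rintro ⟨u, v⟩ h
    simp only [mem_filter, mem_univ, true_and] at h ⊢
    obtain ⟨hadj, hu, hv, hQ⟩ := h
    exact ⟨⟨SimpleGraph.mem_edgeFinset.2 hadj, u, v, rfl, hu, hv⟩, hQ⟩
  · rintro ⟨u1, v1⟩ h1 ⟨u2, v2⟩ h2 he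
    simp only [mem_filter, mem_univ, true_and] at h1 h2
    rcases Sym2.eq_iff.1 he with ⟨h, h'⟩ | ⟨h, h'⟩
    · simp only [Prod.mk.injEq]
      exact ⟨h, h'⟩
    · have h : u1 = v2 := h
      exact absurd (h ▸ h1.2.1) h2.2.2.1
  · rintro e he
    simp only [mem_filter] at he
    obtain ⟨⟨hmem, u, v, rfl, hu, hv⟩, hQ⟩ := he
    have hadj : G.Adj u v := SimpleGraph.mem_edgeFinset.1 hmem
    exact ⟨(u, v), by simp [hadj, hu, hv, hQ], rfl⟩

/-- If `Ŷ` minimizes the number of violated edge observations, `Ŷ ≠ ±Y`, and `S` is a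
(maximal) connected component of the disagreement set of `Ŷ` with the ground truth `Y`,
then the number of edges of `δ(S)` whose observation is flipped from the ground truth is
at least `⌈|δ(S)|/2⌉`. -/
theorem stmt6 {V : Type*} [Fintype V] [DecidableEq V] (G : SimpleGraph V)
    [DecidableRel G.Adj] (X : Sym2 V → ℤˣ) (Y Yh : V → ℤˣ)
    (hmin : ∀ Y' : V → ℤˣ, edgeCost G Yh X ≤ edgeCost G Y' X)
    (hne : Yh ≠ Y) (hne' : Yh ≠ fun v => - Y v)
    (S : Finset V) (hSne : S.Nonempty)
    (hSD : ∀ v ∈ S, Yh v ≠ Y v)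
    (hconn : (G.induce (S : Set V)).Connected)
    (hmax : ∀ u ∈ S, ∀ v : V, G.Adj u v → Yh v ≠ Y v → v ∈ S) :
    (bdry G S + 1) / 2
      ≤ (Finset.univ.filter (fun pr : V × V =>
          G.Adj pr.1 pr.2 ∧ pr.1 ∈ S ∧ pr.2 ∉ S ∧
            X s(pr.1, pr.2) ≠ Y pr.1 * Y pr.2)).card := by
  classical
  -- Yh = -Y on S, Yh = Y on neighbors outside S
  have hS : ∀ u ∈ S, Yh u = - Y u := by
    intro u hu
    have h := hSD u hu
    rcases Int.units_eq_one_or (Yh u) with h1 | h1 <;>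
      rcases Int.units_eq_one_or (Y u) with h2 | h2 <;>
        simp [h1, h2] at h ⊢
  have hout : ∀ u ∈ S, ∀ v, G.Adj u v → v ∉ S → Yh v = Y v := by
    intro u hu v hadj hv
    by_contra h
    exact hv (hmax u hu v hadj h)
  set Y' : V → ℤˣ := fun v => if v ∈ S then Y v else Yh v with hY'
  set P : Sym2 V → Prop := fun e => ∃ u v, e = s(u,v) ∧ u ∈ S ∧ v ∉ S with hP
  set B : Finset (Sym2 V) := G.edgeFinset.filter P with hB
  set L : Sym2 V → ℤˣ := edgeLabel Y with hL
  -- facts about boundary edges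
  have hbd : ∀ e ∈ B, edgeLabel Yh e = - L e ∧ edgeLabel Y' e = L e := by
    intro e he
    simp only [hB, mem_filter] at he
    obtain ⟨hmem, u, v, rfl, hu, hv⟩ := he
    have hadj : G.Adj u v := SimpleGraph.mem_edgeFinset.1 hmem
    have h1 : Yh u = - Y u := hS u hu
    have h2 : Yh v = Y v := hout u hu v hadj hv
    constructor
    · simp [edgeLabel, hL, h1, h2]
    · simp [edgeLabel, hY', hL, hu, hv, h2]
  -- non-boundary edges: labels agree
  have hnbd : ∀ e ∈ G.edgeFinset, ¬ P e → edgeLabel Yh e = edgeLabel Y' e := by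
    intro e hmem hnp
    induction e using Sym2.ind with
    | _ u v =>
      have hadj : G.Adj u v := SimpleGraph.mem_edgeFinset.1 hmem
      by_cases hu : u ∈ S <;> by_cases hv : v ∈ S
      · have h1 : Yh u = - Y u := hS u hu
        have h2 : Yh v = - Y v := hS v hv
        simp [edgeLabel, hY', hu, hv, h1, h2]
      · exact absurd ⟨u, v, rfl, hu, hv⟩ hnp
      · exact absurd ⟨v, u, Sym2.eq_swap, hv, hu⟩ hnp
      · simp [edgeLabel, hY', hu, hv]
  -- cost split
  have split : ∀ Z : V → ℤˣ,
      edgeCost G Z X =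
        ((G.edgeFinset.filter (fun e => edgeLabel Z e ≠ X e)).filter P).card +
        ((G.edgeFinset.filter (fun e => edgeLabel Z e ≠ X e)).filter (fun e => ¬ P e)).card := by
    intro Z
    rw [edgeCost, ← Finset.card_filter_add_card_filter_not (p := P)]
  have hcostYh : edgeCost G Yh X =
      (B.filter (fun e => X e = L e)).card +
      ((G.edgeFinset.filter (fun e => edgeLabel Yh e ≠ X e)).filter (fun e => ¬ P e)).card := by
    rw [split Yh]
    congr 1
    rw [Finset.filter_filter, hB, Finset.filter_filter]
    congr 1
    apply Finset.filter_congr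
    intro e he
    constructor
    · rintro ⟨hne2, hpe⟩
      refine ⟨hpe, ?_⟩
      have := (hbd e (by simp [hB, mem_filter, he, hpe])).1
      rw [this] at hne2
      have : X e ≠ - L e := fun h => hne2 h.symm
      exact (units_ne_neg_iff _ _).1 this
    · rintro ⟨hpe, hxe⟩
      refine ⟨?_, hpe⟩
      have hlab := (hbd e (by simp [hB, mem_filter, he, hpe])).1
      rw [hlab]
      intro h
      rw [← h] at hxe
      rcases Int.units_eq_one_or (L e) with h1 | h1 <;> simp [h1] at hxe
  have hcostY' : edgeCost G Y' X =
      (B.filter (fun e => X e ≠ L e)).card +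
      ((G.edgeFinset.filter (fun e => edgeLabel Yh e ≠ X e)).filter (fun e => ¬ P e)).card := by
    rw [split Y']
    congr 1
    · rw [Finset.filter_filter, hB, Finset.filter_filter]
      congr 1
      apply Finset.filter_congr
      intro e he
      constructor
      · rintro ⟨hne2, hpe⟩
        refine ⟨hpe, ?_⟩
        have := (hbd e (by simp [hB, mem_filter, he, hpe])).2
        rw [this] at hne2
        exact fun h => hne2 h.symm
      · rintro ⟨hpe, hxe⟩
        have := (hbd e (by simp [hB, mem_filter, he, hpe])).2
        exact ⟨by rw [this]; exact fun h => hxe h.symm, hpe⟩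
    · rw [Finset.filter_filter, Finset.filter_filter]
      congr 1
      apply Finset.filter_congr
      intro e he
      constructor
      · rintro ⟨hne2, hpe⟩
        exact ⟨by rwa [hnbd e he hpe], hpe⟩
      · rintro ⟨hne2, hpe⟩
        exact ⟨by rwa [← hnbd e he hpe], hpe⟩
  -- minimality
  have hmin' := hmin Y'
  rw [hcostYh, hcostY'] at hmin'
  have hkey : (B.filter (fun e => X e = L e)).card ≤ (B.filter (fun e => X e ≠ L e)).card := by
    omega
  have hBcard : B.card = (B.filter (fun e => X e = L e)).card +
      (B.filter (fun e => X e ≠ L e)).card := by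
    rw [Finset.card_filter_add_card_filter_not (p := fun e => X e = L e)]
  -- translate counts
  have h1 : bdry G S = B.card := by
    rw [bdry]
    have hp := pair_card G S (fun _ => True)
    have hs : univ.filter (fun pr : V × V => G.Adj pr.1 pr.2 ∧ pr.1 ∈ S ∧ pr.2 ∉ S)
        = univ.filter (fun pr : V × V => G.Adj pr.1 pr.2 ∧ pr.1 ∈ S ∧ pr.2 ∉ S ∧ True) := by
      apply Finset.filter_congr; intro pr _; simp
    rw [hs, hp, Finset.filter_true_of_mem (fun _ _ => trivial)]
  have h2 : (Finset.univ.filter (fun pr : V × V =>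
          G.Adj pr.1 pr.2 ∧ pr.1 ∈ S ∧ pr.2 ∉ S ∧
            X s(pr.1, pr.2) ≠ Y pr.1 * Y pr.2)).card
      = (B.filter (fun e => X e ≠ L e)).card := by
    have hp := pair_card G S (fun e => X e ≠ L e)
    have hs : univ.filter (fun pr : V × V => G.Adj pr.1 pr.2 ∧ pr.1 ∈ S ∧ pr.2 ∉ S ∧
          X s(pr.1, pr.2) ≠ Y pr.1 * Y pr.2)
        = univ.filter (fun pr : V × V => G.Adj pr.1 pr.2 ∧ pr.1 ∈ S ∧ pr.2 ∉ S ∧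
          X s(pr.1, pr.2) ≠ L s(pr.1, pr.2)) := by
      apply Finset.filter_congr
      rintro ⟨u, v⟩ _
      simp [hL, edgeLabel]
    rw [hs, hp]
  rw [h1, h2]
  omega
end

section
/- ERM excess risk bound: Let V be a finite set, Y ∈ {±1}^V, q < 1/2, and Z_v independent with Pr(Z_v = Y_v) = 1 - q. Let F ⊆ {±1}^V be a finite class, Y* = argmin_{Y'∈F} ∑_v Pr(Y'_v ≠ Z_v), and Ŷ = argmin_{Y'∈F} ∑_v 1{Y'_v ≠ Z_v} be the empirical risk minimizer. Then with probability at least 1 − δ, for every c > 0: ∑_v Pr(Ŷ_v ≠ Z_v) − ∑_v Pr(Y*_v ≠ Z_v) ≤ (2/3 + c/2)·log(|F|/δ) + (1/c)·∑_v 1{Ŷ_v ≠ Y*_v}. -/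
open Finset

/-- Probability weight of a vertex-noise configuration `g`: each coordinate is flipped
independently with probability `q`. -/
def vwt {V : Type*} [Fintype V] (q : ℝ) (g : V → Bool) : ℝ :=
  ∏ u : V, (if g u then q else 1 - q)

/-- Noisy vertex observations determined by ground truth `Y` and noise `g`. -/
def Zof {V : Type*} (Y : V → ℤˣ) (g : V → Bool) : V → ℤˣ :=
  fun v => (if g v then -1 else 1) * Y v

/-- The (true) risk `∑_v Pr(Y'_v ≠ Z_v)` of a labeling `Y'` under vertex noise rate `q`. -/
def risk {V : Type*} [Fintype V] [DecidableEq V] (q : ℝ) (Y Y' : V → ℤˣ) : ℝ :=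
  ∑ v : V, ∑ g : V → Bool, vwt q g * (if Y' v ≠ Zof Y g v then 1 else 0)

lemma units_dichotomy : ∀ u w : ℤˣ, u ≠ w → u = -w := by decide
lemma units_ne_neg : ∀ u : ℤˣ, u ≠ -u := by decide

lemma fact_ge (n : ℕ) : 2 * 3^n ≤ (n+2).factorial := by
  induction n with
  | zero => simp [Nat.factorial]
  | succ n ih =>
    have : (n+3).factorial = (n+3) * (n+2).factorial := rfl
    rw [this, pow_succ]
    calc 2 * (3^n * 3) = 3 * (2 * 3^n) := by ring
    _ ≤ (n+3) * (n+2).factorial := Nat.mul_le_mul (by omega) ih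

lemma exp_taylor_bound {x : ℝ} (h0 : 0 ≤ x) (h3 : x < 3) :
    Real.exp x - 1 - x ≤ x^2/2 * (1 - x/3)⁻¹ := by
  have hsum : Summable (fun n => x^n / n.factorial : ℕ → ℝ) := Real.summable_pow_div_factorial x
  have hexp : Real.exp x = ∑' n : ℕ, x^n / n.factorial := by
    rw [Real.exp_eq_exp_ℝ, NormedSpace.exp_eq_tsum_div]
  have hgeo : Summable (fun n => x^2/2 * (x/3)^n : ℕ → ℝ) :=
    (summable_geometric_of_lt_one (by positivity) (by linarith)).mul_left _
  have hsplit : (∑ i ∈ Finset.range 2, x^i / i.factorial) + (∑' n : ℕ, x^(n+2) / (n+2).factorial)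
      = ∑' n : ℕ, x^n / n.factorial := Summable.sum_add_tsum_nat_add 2 hsum
  have hterm : ∀ n : ℕ, x^(n+2) / (n+2).factorial ≤ x^2/2 * (x/3)^n := by
    intro n
    have h1 : (2 * 3^n : ℝ) ≤ (n+2).factorial := by exact_mod_cast fact_ge n
    rw [div_le_iff₀ (by positivity)]
    calc x^(n+2) = (x^2/2 * (x/3)^n) * (2 * 3^n) := by
          field_simp; rw [mul_assoc, ← mul_pow]; norm_num; ring
    _ ≤ _ := by
          apply mul_le_mul_of_nonneg_left h1 (by positivity)
  have htail : (∑' n : ℕ, x^(n+2) / (n+2).factorial) ≤ ∑' n : ℕ, x^2/2 * (x/3)^n :=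
    Summable.tsum_le_tsum hterm ((summable_nat_add_iff 2).mpr hsum) hgeo
  have hgeosum : (∑' n : ℕ, (x/3)^n) = (1 - x/3)⁻¹ :=
    tsum_geometric_of_lt_one (by positivity) (by linarith)
  have htt : (∑' n : ℕ, x^2/2 * (x/3)^n) = x^2/2 * (1 - x/3)⁻¹ := by
    rw [tsum_mul_left, hgeosum]
  have hr2 : (∑ i ∈ Finset.range 2, x^i / i.factorial) = 1 + x := by
    simp [Finset.sum_range_succ, Nat.factorial]
  nlinarith [hsplit, htail, htt, hr2, hexp]

lemma two_point_mgf {p l : ℝ} (hp0 : 0 ≤ p) (hp1 : p ≤ 1) (hl : 0 ≤ l) :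
    p * Real.exp (-l) + (1-p) * Real.exp l
      ≤ Real.exp (-(l*(2*p-1)) + (Real.exp l - 1 - l)) := by
  have hsinh : 2*l ≤ Real.exp l - Real.exp (-l) := by
    have := Real.self_le_sinh_iff.mpr hl
    rw [Real.sinh_eq] at this; linarith
  have key : p * Real.exp (-l) + (1-p) * Real.exp l ≤ 1 - l*(2*p-1) + (Real.exp l - 1 - l) := by
    have hm : Real.exp (-l) ≤ Real.exp l - 2*l := by linarith
    have h2 : p * Real.exp (-l) ≤ p * (Real.exp l - 2*l) :=
      mul_le_mul_of_nonneg_left hm hp0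
    nlinarith
  have hle := Real.add_one_le_exp (-(l*(2*p-1)) + (Real.exp l - 1 - l))
  linarith

lemma factorize {V : Type*} [Fintype V] [DecidableEq V] (q : ℝ) (h : V → Bool → ℝ) :
    ∑ g : V → Bool, vwt q g * ∏ v, h v (g v)
      = ∏ v, (q * h v true + (1-q) * h v false) := by
  have hh : ∀ g : V → Bool, vwt q g * ∏ v, h v (g v)
      = ∏ v, ((if g v then q else 1-q) * h v (g v)) := by
    intro g; rw [vwt, ← Finset.prod_mul_distrib]
  simp_rw [hh]
  rw [← Fintype.prod_sum (fun v b => (if b then q else 1-q) * h v b)]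
  congr 1; ext v
  rw [Fintype.sum_bool]
  simp

lemma sum_vwt {V : Type*} [Fintype V] [DecidableEq V] {q : ℝ} :
    ∑ g : V → Bool, vwt q g = 1 := by
  have := factorize (V := V) q (fun _ _ => 1)
  simpa using this

lemma marginal {V : Type*} [Fintype V] [DecidableEq V] (q : ℝ) (v0 : V) (h : Bool → ℝ) :
    ∑ g : V → Bool, vwt q g * h (g v0) = q * h true + (1-q) * h false := by
  have hfac := factorize q (fun v b => if v = v0 then h b else 1)
  rw [show (∑ g : V → Bool, vwt q g * h (g v0))
      = ∑ g : V → Bool, vwt q g * ∏ v, (if v = v0 then h (g v) else 1) by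
    apply Finset.sum_congr rfl; intro g _
    congr 1
    rw [Finset.prod_eq_single v0]
    · simp
    · intro b _ hb; simp [hb]
    · simp]
  rw [hfac, Finset.prod_eq_single v0]
  · simp
  · intro b _ hb; simp [hb]
  · simp

lemma numeric {L H t d l φ : ℝ} (hL : 0 ≤ L) (hH0 : 0 ≤ H) (hH1 : 1 ≤ H) (ht0 : 0 ≤ t)
    (ht : t = 2/3*L + Real.sqrt (2*L*H))
    (hd : d = H + t/3) (hd0 : 0 < d) (hl : l = t/d)
    (hφb : φ ≤ l^2/2 * (1 - l/3)⁻¹) :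
    H * φ - l * t ≤ -L := by
  have h13 : 1 - l/3 = H/d := by
    rw [hl]; field_simp; rw [hd]; ring
  have hHne : H ≠ 0 := by linarith
  have heq : H * (l^2/2 * (1 - l/3)⁻¹) = t^2/(2*d) := by
    rw [h13, hl]; field_simp
  have h1 : H * φ ≤ t^2/(2*d) := by
    rw [← heq]; exact mul_le_mul_of_nonneg_left hφb hH0
  have h2 : l * t = t^2/d := by rw [hl]; ring
  have hb := Real.sq_sqrt (show (0:ℝ) ≤ 2*L*H by positivity)
  have hb0 := Real.sqrt_nonneg (2*L*H)
  have h3 : L ≤ t^2/(2*d) := by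
    rw [le_div_iff₀ (by linarith)]
    rw [hd, ht]
    nlinarith [hb, hb0, hL, hH0, mul_nonneg hL hb0]
  have h4 : t^2/(2*d) - t^2/d = -(t^2/(2*d)) := by field_simp; ring
  linarith [h1, h2, h3, h4]


open Classical in
noncomputable def badInd {V : Type*} [Fintype V] [DecidableEq V]
    (q L : ℝ) (Y Ystar Y' : V → ℤˣ) (g : V → Bool) : ℝ :=
  if risk q Y Y' - risk q Y Ystar
      - (((univ.filter fun v => Y' v ≠ Zof Y g v).card : ℝ)
         - ((univ.filter fun v => Ystar v ≠ Zof Y g v).card : ℝ))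
    > 2/3*L + Real.sqrt (2*L*((univ.filter fun v => Y' v ≠ Ystar v).card : ℝ))
   then 1 else 0

lemma badInd_nonneg {V : Type*} [Fintype V] [DecidableEq V]
    (q L : ℝ) (Y Ystar Y' : V → ℤˣ) (g : V → Bool) : 0 ≤ badInd q L Y Ystar Y' g := by
  unfold badInd; split <;> norm_num

open Classical in
lemma bad_prob {V : Type*} [Fintype V] [DecidableEq V]
    (q : ℝ) (hq0 : 0 ≤ q) (hq1 : q ≤ 1) (Y Ystar Y' : V → ℤˣ) (L : ℝ) (hL : 0 ≤ L) :
    ∑ g : V → Bool, vwt q g * badInd q L Y Ystar Y' g ≤ Real.exp (-L) := by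
  unfold badInd
  set zz : V → Bool → ℤˣ := fun v b => (if b then -1 else 1) * Y v with hzz
  set τ : V → Bool → ℝ := fun v b =>
    (if Y' v ≠ zz v b then 1 else 0) - (if Ystar v ≠ zz v b then 1 else 0) with hτ
  set D : Finset V := univ.filter fun v => Y' v ≠ Ystar v with hD
  set H : ℝ := (D.card : ℝ) with hH
  set t : ℝ := 2/3*L + Real.sqrt (2*L*H) with ht
  have hH0 : 0 ≤ H := by positivity
  have ht0 : 0 ≤ t := by
    have := Real.sqrt_nonneg (2*L*H); rw [ht]; linarith
  -- risk identity
  have hrisk : ∀ W : V → ℤˣ, risk q Y W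
      = ∑ v : V, (q * (if W v ≠ zz v true then 1 else 0)
          + (1-q) * (if W v ≠ zz v false then 1 else 0)) := by
    intro W; unfold risk
    apply Finset.sum_congr rfl; intro v _
    exact marginal q v (fun b => if W v ≠ zz v b then (1:ℝ) else 0)
  -- card identity
  have hcard : ∀ (W : V → ℤˣ) (g : V → Bool),
      ((univ.filter fun v => W v ≠ Zof Y g v).card : ℝ)
        = ∑ v : V, (if W v ≠ zz v (g v) then (1:ℝ) else 0) := by
    intro W g
    rw [Finset.card_filter]
    push_cast
    rfl
  set Δ : ℝ := risk q Y Y' - risk q Y Ystar with hΔ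
  set S : (V → Bool) → ℝ := fun g => ∑ v : V, τ v (g v) with hS
  set μ : V → ℝ := fun v => q * τ v true + (1-q) * τ v false with hμ
  have hSid : ∀ g : V → Bool,
      ((univ.filter fun v => Y' v ≠ Zof Y g v).card : ℝ)
        - ((univ.filter fun v => Ystar v ≠ Zof Y g v).card : ℝ) = S g := by
    intro g
    rw [hcard, hcard]; simp only [hS]; rw [← Finset.sum_sub_distrib]
  have hΔid : Δ = ∑ v : V, μ v := by
    rw [hΔ, hrisk, hrisk, ← Finset.sum_sub_distrib]
    apply Finset.sum_congr rfl; intro v _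
    simp only [hμ, hτ]; ring
  clear_value zz τ D H t Δ S μ
  -- rewrite the indicator
  have hrew : ∀ g : V → Bool,
      (if Δ
          - (((univ.filter fun v => Y' v ≠ Zof Y g v).card : ℝ)
             - ((univ.filter fun v => Ystar v ≠ Zof Y g v).card : ℝ)) > t
       then (1:ℝ) else 0) = (if Δ - S g > t then 1 else 0) := by
    intro g
    rw [hSid g]
  simp_rw [hrew]
  -- vwt nonneg
  have hw0 : ∀ g : V → Bool, 0 ≤ vwt q g := by
    intro g; rw [vwt]; apply Finset.prod_nonneg; intro u _
    split <;> linarith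
  by_cases hDe : D = ∅
  · -- no disagreement: Δ = 0, S = 0
    have hYY : ∀ v, Y' v = Ystar v := by
      intro v
      by_contra hne
      have : v ∈ D := by rw [hD]; simp [hne]
      simp [hDe] at this
    have hΔ0 : Δ = 0 := by
      rw [hΔ]; have : risk q Y Y' = risk q Y Ystar := by
        unfold risk; apply Finset.sum_congr rfl; intro v _
        apply Finset.sum_congr rfl; intro g _
        rw [hYY v]
      linarith
    have hS0 : ∀ g, S g = 0 := by
      intro g; simp only [hS]; apply Finset.sum_eq_zero; intro v _
      simp only [hτ]; simp [hYY v]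
    have : ∀ g : V → Bool, (if Δ - S g > t then (1:ℝ) else 0) = 0 := by
      intro g; rw [if_neg]; rw [hΔ0, hS0]; simp; linarith
    simp_rw [this]
    simp
    positivity
  · -- main case: H ≥ 1
    have hH1 : (1:ℝ) ≤ H := by
      rw [hH]; have : 1 ≤ D.card := Finset.card_pos.mpr (Finset.nonempty_of_ne_empty hDe)
      exact_mod_cast this
    set d : ℝ := H + t/3 with hd
    have hd0 : 0 < d := by
      rw [hd, ht]; have := Real.sqrt_nonneg (2*L*H); linarith
    set l : ℝ := t / d with hl
    have hl0 : 0 ≤ l := div_nonneg ht0 hd0.le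
    have hl3 : l < 3 := by
      rw [hl, div_lt_iff₀ hd0, hd]; linarith
    clear_value d l
    set φ : ℝ := Real.exp l - 1 - l with hφ
    clear_value φ
    -- per-vertex factor bound
    have keyfactor : ∀ v : V,
        q * Real.exp (-l * τ v true) + (1-q) * Real.exp (-l * τ v false)
          ≤ Real.exp (-l * μ v + (if v ∈ D then φ else 0)) := by
      intro v
      by_cases hv : v ∈ D
      · have hne : Y' v ≠ Ystar v := by
          rw [hD] at hv; simpa using hv
        rw [if_pos hv]
        have hztrue : zz v true = -Y v := by rw [hzz]; simp
        have hzfalse : zz v false = Y v := by rw [hzz]; simp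
        by_cases hyy : Y' v = Y v
        · have hys : Ystar v = -Y v := units_dichotomy _ _ (fun h => hne (hyy.trans h.symm))
          have hτt : τ v true = 1 := by
            simp only [hτ, hztrue]
            rw [if_pos (by rw [hyy]; exact units_ne_neg _), if_neg (by rw [hys]; simp)]
            ring
          have hτf : τ v false = -1 := by
            simp only [hτ, hzfalse]
            rw [if_neg (by rw [hyy]; simp), if_pos (by rw [hys]; exact Ne.symm (units_ne_neg _))]
            ring
          have hμv : μ v = 2*q - 1 := by simp only [hμ]; rw [hτt, hτf]; ring
          rw [hτt, hτf, hμv]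
          have := two_point_mgf hq0 hq1 hl0 (p := q)
          calc q * Real.exp (-l * 1) + (1-q) * Real.exp (-l * (-1))
              = q * Real.exp (-l) + (1-q) * Real.exp l := by ring_nf
            _ ≤ Real.exp (-(l*(2*q-1)) + (Real.exp l - 1 - l)) := this
            _ = Real.exp (-l * (2*q-1) + φ) := by rw [hφ]; ring_nf
        · have hyy' : Y' v = -Y v := units_dichotomy _ _ hyy
          have hys : Ystar v = Y v := by
            have h2 := units_dichotomy _ _ (Ne.symm hne)
            rw [hyy'] at h2; simpa using h2
          have hτt : τ v true = -1 := by
            simp only [hτ, hztrue]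
            rw [if_neg (by rw [hyy']; simp), if_pos (by rw [hys]; exact units_ne_neg _)]
            ring
          have hτf : τ v false = 1 := by
            simp only [hτ, hzfalse]
            rw [if_pos (by rw [hyy']; exact Ne.symm (units_ne_neg _)), if_neg (by rw [hys]; simp)]
            ring
          have hμv : μ v = 1 - 2*q := by simp only [hμ]; rw [hτt, hτf]; ring
          rw [hτt, hτf, hμv]
          have := two_point_mgf (p := 1-q) (by linarith) (by linarith) hl0
          calc q * Real.exp (-l * (-1)) + (1-q) * Real.exp (-l * 1)
              = (1-q) * Real.exp (-l) + (1-(1-q)) * Real.exp l := by ring_nf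
            _ ≤ Real.exp (-(l*(2*(1-q)-1)) + (Real.exp l - 1 - l)) := this
            _ = Real.exp (-l * (1-2*q) + φ) := by rw [hφ]; ring_nf
      · have heq : Y' v = Ystar v := by
          rw [hD] at hv; simpa using hv
        rw [if_neg hv]
        have hτt : τ v true = 0 := by simp only [hτ, heq]; ring
        have hτf : τ v false = 0 := by simp only [hτ, heq]; ring
        have hμv : μ v = 0 := by simp only [hμ]; rw [hτt, hτf]; ring
        rw [hτt, hτf, hμv]
        simp
  -- Chernoff
    have step1 : ∑ g : V → Bool, vwt q g * (if Δ - S g > t then (1:ℝ) else 0)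
        ≤ ∑ g : V → Bool, vwt q g * Real.exp (l * (Δ - S g - t)) := by
      apply Finset.sum_le_sum; intro g _
      apply mul_le_mul_of_nonneg_left _ (hw0 g)
      split
      · rename_i hgt
        apply Real.one_le_exp
        apply mul_nonneg hl0; linarith
      · positivity
    have step2 : ∑ g : V → Bool, vwt q g * Real.exp (l * (Δ - S g - t))
        = Real.exp (l * (Δ - t)) * ∑ g : V → Bool, vwt q g * ∏ v : V, Real.exp (-l * τ v (g v)) := by
      rw [Finset.mul_sum]
      apply Finset.sum_congr rfl; intro g _
      rw [← mul_assoc, mul_comm (Real.exp (l * (Δ - t))) (vwt q g), mul_assoc]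
      congr 1
      rw [← Real.exp_sum, ← Real.exp_add]
      congr 1
      have hsum : ∑ v : V, -l * τ v (g v) = (-l) * S g := by
        simp only [hS]; rw [Finset.mul_sum]
      rw [hsum]; ring
    have step3 : ∑ g : V → Bool, vwt q g * ∏ v : V, Real.exp (-l * τ v (g v))
        = ∏ v : V, (q * Real.exp (-l * τ v true) + (1-q) * Real.exp (-l * τ v false)) :=
      factorize q (fun v b => Real.exp (-l * τ v b))
    have step4 : ∏ v : V, (q * Real.exp (-l * τ v true) + (1-q) * Real.exp (-l * τ v false))
        ≤ Real.exp (-l * Δ + H * φ) := by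
      calc ∏ v : V, (q * Real.exp (-l * τ v true) + (1-q) * Real.exp (-l * τ v false))
          ≤ ∏ v : V, Real.exp (-l * μ v + (if v ∈ D then φ else 0)) := by
            apply Finset.prod_le_prod
            · intro v _
              exact add_nonneg (mul_nonneg hq0 (Real.exp_pos _).le)
                (mul_nonneg (by linarith) (Real.exp_pos _).le)
            · intro v _; exact keyfactor v
        _ = Real.exp (∑ v : V, (-l * μ v + (if v ∈ D then φ else 0))) := (Real.exp_sum _ _).symm
        _ = Real.exp (-l * Δ + H * φ) := by
            congr 1
            rw [Finset.sum_add_distrib, ← Finset.mul_sum, ← hΔid]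
            congr 1
            rw [Finset.sum_ite_mem, Finset.univ_inter, Finset.sum_const,
              nsmul_eq_mul, hH]
    have hφb : φ ≤ l^2/2 * (1 - l/3)⁻¹ := by rw [hφ]; exact exp_taylor_bound hl0 hl3
    have hkey : H * φ - l * t ≤ -L := numeric hL hH0 hH1 ht0 ht hd hd0 hl hφb
    calc ∑ g : V → Bool, vwt q g * (if Δ - S g > t then (1:ℝ) else 0)
        ≤ ∑ g : V → Bool, vwt q g * Real.exp (l * (Δ - S g - t)) := step1
      _ = Real.exp (l * (Δ - t)) * ∑ g : V → Bool, vwt q g * ∏ v : V, Real.exp (-l * τ v (g v)) := step2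
      _ = Real.exp (l * (Δ - t)) * ∏ v : V, (q * Real.exp (-l * τ v true) + (1-q) * Real.exp (-l * τ v false)) := by rw [step3]
      _ ≤ Real.exp (l * (Δ - t)) * Real.exp (-l * Δ + H * φ) :=
          mul_le_mul_of_nonneg_left step4 (Real.exp_pos _).le
      _ = Real.exp (H * φ - l * t) := by rw [← Real.exp_add]; congr 1; ring
      _ ≤ Real.exp (-L) := Real.exp_le_exp.mpr hkey


-- ERM excess risk bound: with probability at least `1 − δ` over the vertex noise, for every
-- `c > 0`, the empirical risk minimizer `Ŷ` over a finite class `F` satisfies the stated bound.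
open Classical in
theorem stmt9 {V : Type*} [Fintype V] [DecidableEq V]
    (q δ : ℝ) (hq0 : 0 ≤ q) (hq : q < 1/2) (hδ : 0 < δ) (hδ1 : δ ≤ 1)
    (Y : V → ℤˣ) (F : Finset (V → ℤˣ)) (hF : F.Nonempty)
    (Ystar : V → ℤˣ) (hYstarF : Ystar ∈ F)
    (hYstarMin : ∀ Y' ∈ F, risk q Y Ystar ≤ risk q Y Y')
    (sel : (V → ℤˣ) → (V → ℤˣ))
    (hselF : ∀ Z : V → ℤˣ, sel Z ∈ F)
    (hselERM : ∀ Z : V → ℤˣ, ∀ Y' ∈ F,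
      (Finset.univ.filter (fun v => sel Z v ≠ Z v)).card
        ≤ (Finset.univ.filter (fun v => Y' v ≠ Z v)).card) :
    1 - δ ≤ ∑ g : V → Bool, vwt q g *
        (if ∀ c : ℝ, 0 < c →
            risk q Y (sel (Zof Y g)) - risk q Y Ystar
              ≤ (2/3 + c/2) * Real.log (F.card / δ)
                + (1/c) * ((Finset.univ.filter
                    (fun v => sel (Zof Y g) v ≠ Ystar v)).card : ℝ)
          then 1 else 0) := by
  have hq1 : q ≤ 1 := by linarith
  set L : ℝ := Real.log (F.card / δ) with hLdef
  have hcard1 : (1:ℝ) ≤ F.card := by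
    have := Finset.card_pos.mpr hF
    exact_mod_cast this
  have hcard0 : (0:ℝ) < F.card := by linarith
  have hL : 0 ≤ L := by
    rw [hLdef]
    apply Real.log_nonneg
    rw [le_div_iff₀ hδ]; linarith
  have hexpL : Real.exp (-L) = δ / F.card := by
    rw [hLdef, ← Real.log_inv, Real.exp_log (by positivity)]
    rw [inv_div]
  clear_value L
  have hw0 : ∀ g : V → Bool, 0 ≤ vwt q g := by
    intro g; rw [vwt]; apply Finset.prod_nonneg; intro u _
    split <;> linarith
  have key1 : ∀ Y' ∈ F, ∑ g : V → Bool, vwt q g * badInd q L Y Ystar Y' g ≤ δ / F.card := by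
    intro Y' _
    rw [← hexpL]
    exact bad_prob q hq0 hq1 Y Ystar Y' L hL
  -- pointwise comparison
  have key2 : ∀ g : V → Bool,
      1 - ∑ Y' ∈ F, badInd q L Y Ystar Y' g
        ≤ (if ∀ c : ℝ, 0 < c →
            risk q Y (sel (Zof Y g)) - risk q Y Ystar
              ≤ (2/3 + c/2) * L
                + (1/c) * ((Finset.univ.filter
                    (fun v => sel (Zof Y g) v ≠ Ystar v)).card : ℝ)
          then (1:ℝ) else 0) := by
    intro g
    by_cases hc : ∀ c : ℝ, 0 < c →
        risk q Y (sel (Zof Y g)) - risk q Y Ystar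
          ≤ (2/3 + c/2) * L
            + (1/c) * ((Finset.univ.filter
                (fun v => sel (Zof Y g) v ≠ Ystar v)).card : ℝ)
    · rw [if_pos hc]
      have : (0:ℝ) ≤ ∑ Y' ∈ F, badInd q L Y Ystar Y' g :=
        Finset.sum_nonneg fun Y' _ => badInd_nonneg q L Y Ystar Y' g
      linarith
    · rw [if_neg hc]
      have hWF : sel (Zof Y g) ∈ F := hselF _
      have hone : (1:ℝ) ≤ badInd q L Y Ystar (sel (Zof Y g)) g := by
        unfold badInd
        rw [if_pos]
        by_contra hno
        push_neg at hno
        apply hc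
        intro c hcpos
        set W := sel (Zof Y g) with hW
        set Hw : ℝ := ((Finset.univ.filter (fun v => W v ≠ Ystar v)).card : ℝ) with hHw
        have hHw0 : (0:ℝ) ≤ Hw := by rw [hHw]; positivity
        clear_value Hw
        have hcount : ((Finset.univ.filter (fun v => W v ≠ Zof Y g v)).card : ℝ)
            ≤ ((Finset.univ.filter (fun v => Ystar v ≠ Zof Y g v)).card : ℝ) := by
          exact_mod_cast hselERM (Zof Y g) Ystar hYstarF
        have hΔle : risk q Y W - risk q Y Ystar ≤ 2/3*L + Real.sqrt (2*L*Hw) := by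
          linarith
        have hs := Real.sq_sqrt (show (0:ℝ) ≤ 2*L*Hw by positivity)
        have hs0 := Real.sqrt_nonneg (2*L*Hw)
        have hrhs0 : (0:ℝ) ≤ c/2*L + 1/c*Hw := by positivity
        have hsqb : 2*L*Hw ≤ (c/2*L + 1/c*Hw)^2 := by
          have hcc : c * (1/c) = 1 := mul_one_div_cancel hcpos.ne'
          nlinarith [sq_nonneg (c/2*L - 1/c*Hw), hcc, hL, hHw0, hcpos.le]
        have hsq : Real.sqrt (2*L*Hw) ≤ c/2*L + 1/c*Hw := by
          calc Real.sqrt (2*L*Hw) ≤ Real.sqrt ((c/2*L + 1/c*Hw)^2) := Real.sqrt_le_sqrt hsqb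
            _ = c/2*L + 1/c*Hw := Real.sqrt_sq hrhs0
        calc risk q Y W - risk q Y Ystar ≤ 2/3*L + Real.sqrt (2*L*Hw) := hΔle
          _ ≤ 2/3*L + (c/2*L + 1/c*Hw) := by linarith
          _ = (2/3 + c/2) * L + (1/c) * Hw := by ring
      have : badInd q L Y Ystar (sel (Zof Y g)) g
          ≤ ∑ Y' ∈ F, badInd q L Y Ystar Y' g :=
        Finset.single_le_sum (fun Y' _ => badInd_nonneg q L Y Ystar Y' g) hWF
      linarith
  -- assemble
  have main : ∑ g : V → Bool, vwt q g * (1 - ∑ Y' ∈ F, badInd q L Y Ystar Y' g)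
      ≤ ∑ g : V → Bool, vwt q g *
        (if ∀ c : ℝ, 0 < c →
            risk q Y (sel (Zof Y g)) - risk q Y Ystar
              ≤ (2/3 + c/2) * L
                + (1/c) * ((Finset.univ.filter
                    (fun v => sel (Zof Y g) v ≠ Ystar v)).card : ℝ)
          then (1:ℝ) else 0) :=
    Finset.sum_le_sum fun g _ => mul_le_mul_of_nonneg_left (key2 g) (hw0 g)
  have expand : ∑ g : V → Bool, vwt q g * (1 - ∑ Y' ∈ F, badInd q L Y Ystar Y' g)
      = 1 - ∑ Y' ∈ F, ∑ g : V → Bool, vwt q g * badInd q L Y Ystar Y' g := by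
    simp_rw [mul_sub, mul_one, Finset.sum_sub_distrib, sum_vwt, Finset.mul_sum]
    rw [Finset.sum_comm]
  have bnd : ∑ Y' ∈ F, ∑ g : V → Bool, vwt q g * badInd q L Y Ystar Y' g ≤ δ := by
    calc ∑ Y' ∈ F, ∑ g : V → Bool, vwt q g * badInd q L Y Ystar Y' g
        ≤ ∑ _Y' ∈ F, δ / F.card := Finset.sum_le_sum key1
      _ = F.card * (δ / F.card) := by rw [Finset.sum_const, nsmul_eq_mul]
      _ = δ := by field_simp
  linarith [main, expand ▸ main, bnd, expand]
end

section
/- Tree inference guarantee: Let G = (V,E) be a tree on n vertices with ground truth Y ∈ {±1}^V, edge observations X_{uv} flipped independently with probability p, and vertex observations Z_v flipped independently with probability q = 1/2 − ε < 1/2. Let Ŷ minimize ∑_v 1{Ŷ_v ≠ Z_v} subject to ∑_{(u,v)∈E} 1{Ŷ_u ≠ X_{uv}Ŷ_v} ≤ 2pn + 2log(2/δ). Then with probability at least 1 − δ, ∑_v 1{Ŷ_v ≠ Y_v} ≤ (1/ε²)·(2pn + 2log(2/δ) + 1)·log(2e/(pδ)). -/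
set_option maxHeartbeats 1000000


open Finset

/-- Probability weight of an edge-noise configuration `f`: independent flips w.p. `p`. -/
def ewt {V : Type*} [Fintype V] [DecidableEq V] (p : ℝ) (f : Sym2 V → Bool) : ℝ :=
  ∏ e : Sym2 V, (if f e then p else 1 - p)

/-- Noisy edge observations determined by ground truth `Y` and edge noise `f`. -/
def Xof {V : Type*} (Y : V → ℤˣ) (f : Sym2 V → Bool) : Sym2 V → ℤˣ :=
  fun e => (if f e then -1 else 1) * edgeLabel Y e

/-! ### Auxiliary lemmas -/

lemma sum_prod_bool {α : Type*} [Fintype α] [DecidableEq α] (F : α → Bool → ℝ) :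
    ∑ f : α → Bool, ∏ a, F a (f a) = ∏ a, (F a true + F a false) := by
  have h := Finset.prod_univ_sum (fun _ : α => (Finset.univ : Finset Bool)) F
  rw [Fintype.piFinset_univ] at h
  rw [← h]
  exact Finset.prod_congr rfl fun a _ => by rw [Fintype.sum_bool]

lemma walk_prop {V : Type*} {G : SimpleGraph V} (P : V → Prop)
    (step : ∀ u v, G.Adj u v → P u → P v) :
    ∀ {a b : V} (_ : G.Walk a b), P a → P b := by
  intro a b w
  induction w with
  | nil => exact id
  | cons h _ ih => exact fun ha => ih (step _ _ h ha)

lemma units_eq_of_ne_iff {a b c : ℤˣ} (h : (a ≠ c) ↔ (b ≠ c)) : a = b := by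
  rcases Int.units_eq_one_or a with rfl | rfl <;>
  rcases Int.units_eq_one_or b with rfl | rfl <;>
  rcases Int.units_eq_one_or c with rfl | rfl <;> simp_all

lemma units_ne_neg_one_mul (u : ℤˣ) : u ≠ -1 * u := by
  rcases Int.units_eq_one_or u with rfl | rfl <;> decide

lemma pow_q_le {q : ℝ} (hq0 : 0 ≤ q) (hq2 : q ≤ 1 - q) {k d : ℕ} (hkd : k ≤ d)
    (h2k : d ≤ 2 * k) : q ^ k * (1 - q) ^ (d - k) ≤ Real.sqrt (q * (1 - q)) ^ d := by
  have h1q : 0 ≤ 1 - q := le_trans hq0 hq2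
  set s := Real.sqrt (q * (1 - q)) with hs
  have hs0 : 0 ≤ s := Real.sqrt_nonneg _
  have hs2 : s ^ 2 = q * (1 - q) := Real.sq_sqrt (by positivity)
  have hqs : q ≤ s := by
    rw [hs, Real.le_sqrt hq0 (by positivity)]
    nlinarith
  set m := d - k with hm
  obtain ⟨c, hkc, hdc⟩ : ∃ c, k = m + c ∧ d = 2 * m + c := ⟨k - m, by omega, by omega⟩
  rw [hkc, hdc]
  calc q ^ (m + c) * (1 - q) ^ m
      = (q * (1 - q)) ^ m * q ^ c := by rw [pow_add, mul_pow]; ring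
    _ ≤ (q * (1 - q)) ^ m * s ^ c :=
        mul_le_mul_of_nonneg_left (pow_le_pow_left₀ hq0 hqs _) (by positivity)
    _ = s ^ (2 * m + c) := by rw [pow_add, pow_mul, hs2]

lemma edgeLabel_mk {V : Type*} (Y : V → ℤˣ) (u v : V) :
    edgeLabel Y s(u, v) = Y u * Y v := rfl

lemma label_inj {V : Type*} [Fintype V] [DecidableEq V] (G : SimpleGraph V)
    [DecidableRel G.Adj] (hc : G.Connected) (X : Sym2 V → ℤˣ) (r : V)
    (Y₁ Y₂ : V → ℤˣ) (h1 : Y₁ r = Y₂ r)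
    (h2 : G.edgeFinset.filter (fun e => edgeLabel Y₁ e ≠ X e)
        = G.edgeFinset.filter (fun e => edgeLabel Y₂ e ≠ X e)) : Y₁ = Y₂ := by
  funext v
  refine walk_prop (fun v => Y₁ v = Y₂ v) ?_ ((hc.preconnected r v).some) h1
  intro u w hadj huv
  have he : s(u, w) ∈ G.edgeFinset := by
    rw [SimpleGraph.mem_edgeFinset, SimpleGraph.mem_edgeSet]; exact hadj
  have hiff : (edgeLabel Y₁ s(u, w) ≠ X s(u, w)) ↔ (edgeLabel Y₂ s(u, w) ≠ X s(u, w)) := by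
    have := Finset.ext_iff.mp h2 s(u, w)
    simp only [Finset.mem_filter, he, true_and] at this
    exact this
  have hlab := units_eq_of_ne_iff hiff
  rw [edgeLabel_mk, edgeLabel_mk, huv] at hlab
  exact mul_left_cancel hlab

lemma count_lemma {V : Type*} [Fintype V] [DecidableEq V] (G : SimpleGraph V)
    [DecidableRel G.Adj] (hc : G.Connected) (X : Sym2 V → ℤˣ) (x : ℝ) (hx : 0 ≤ x) :
    ∑ Y' : V → ℤˣ, x ^ (edgeCost G Y' X) ≤ 2 * (1 + x) ^ G.edgeFinset.card := by
  classical
  have hne : Nonempty V := hc.nonempty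
  obtain ⟨r⟩ := hne
  set ι : (V → ℤˣ) → ℤˣ × Finset (Sym2 V) :=
    fun Y' => (Y' r, G.edgeFinset.filter (fun e => edgeLabel Y' e ≠ X e)) with hι
  have hinj : ∀ Y₁ ∈ (univ : Finset (V → ℤˣ)), ∀ Y₂ ∈ univ, ι Y₁ = ι Y₂ → Y₁ = Y₂ := by
    intro Y₁ _ Y₂ _ h
    rw [hι, Prod.mk.injEq] at h
    exact label_inj G hc X r Y₁ Y₂ h.1 h.2
  have hcard2 : (Finset.univ : Finset ℤˣ).card = 2 := by
    have huniv : (Finset.univ : Finset ℤˣ) = {1, -1} := by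
      ext u; simpa using Int.units_eq_one_or u
    rw [huniv, Finset.card_insert_of_notMem (by simp), Finset.card_singleton]
  calc ∑ Y' : V → ℤˣ, x ^ (edgeCost G Y' X)
      = ∑ pr ∈ Finset.image ι univ, x ^ pr.2.card :=
        (Finset.sum_image (f := fun pr : ℤˣ × Finset (Sym2 V) => x ^ pr.2.card) hinj).symm
    _ ≤ ∑ pr ∈ (univ : Finset ℤˣ) ×ˢ G.edgeFinset.powerset, x ^ pr.2.card := by
        apply Finset.sum_le_sum_of_subset_of_nonneg
        · intro pr hpr
          obtain ⟨Y', _, rfl⟩ := Finset.mem_image.mp hpr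
          rw [Finset.mem_product]
          exact ⟨Finset.mem_univ _, Finset.mem_powerset.mpr (Finset.filter_subset _ _)⟩
        · intro pr _ _; positivity
    _ = 2 * ∑ S ∈ G.edgeFinset.powerset, x ^ S.card := by
        rw [Finset.sum_product]
        have h : ∑ s : ℤˣ, ∑ y ∈ G.edgeFinset.powerset, x ^ ((s, y).2.card)
            = ∑ _s : ℤˣ, ∑ S ∈ G.edgeFinset.powerset, x ^ S.card := rfl
        rw [h, Finset.sum_const, hcard2, nsmul_eq_mul]
        norm_num
    _ = 2 * (1 + x) ^ G.edgeFinset.card := by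
        congr 1
        have := Finset.prod_add (fun _ : Sym2 V => x) (fun _ => (1:ℝ)) G.edgeFinset
        simp only [Finset.prod_const, Finset.prod_const_one, one_pow, mul_one] at this
        rw [← this, add_comm x 1]

lemma prob_reduce {α β : Type*} [Fintype α] [Fintype β] (w1 : α → ℝ) (w2 : β → ℝ)
    (I : α → β → ℝ) (δ : ℝ) (h1 : ∑ a, w1 a = 1) (h2 : ∑ b, w2 b = 1)
    (hbad : ∑ a, ∑ b, w1 a * w2 b * (1 - I a b) ≤ δ) :
    1 - δ ≤ ∑ a, ∑ b, w1 a * w2 b * I a b := by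
  have expand : ∑ a, ∑ b, w1 a * w2 b * I a b
      = 1 - ∑ a, ∑ b, w1 a * w2 b * (1 - I a b) := by
    have hm : ∑ a, ∑ b, w1 a * w2 b = 1 := by
      rw [← h1]; exact Finset.sum_congr rfl fun a _ => by rw [← Finset.mul_sum, h2, mul_one]
    rw [eq_sub_iff_add_eq]
    calc (∑ a, ∑ b, w1 a * w2 b * I a b) + ∑ a, ∑ b, w1 a * w2 b * (1 - I a b)
        = ∑ a, ∑ b, w1 a * w2 b := by
          rw [← Finset.sum_add_distrib]
          refine Finset.sum_congr rfl fun a _ => ?_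
          rw [← Finset.sum_add_distrib]
          exact Finset.sum_congr rfl fun b _ => by ring
      _ = 1 := hm
  rw [expand]; linarith

/-- Tree inference guarantee: if `G` is a tree on `n` vertices and `Ŷ` minimizes the
disagreement with the vertex observations `Z` subject to having at most `2pn + 2 log(2/δ)`
violated edge observations, then with probability at least `1 − δ` its Hamming error is at
most `(1/ε²)(2pn + 2 log(2/δ) + 1) log(2e/(pδ))`. -/
theorem stmt11 {V : Type*} [Fintype V] [DecidableEq V] (G : SimpleGraph V)
    [DecidableRel G.Adj] (hT : G.IsTree)
    (p q ε δ : ℝ) (hp0 : 0 < p) (hp : p < 1/2) (hq0 : 0 ≤ q) (hq : q = 1/2 - ε)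
    (hε : 0 < ε) (hδ : 0 < δ) (hδ1 : δ ≤ 1)
    (Y : V → ℤˣ)
    (sel : (Sym2 V → ℤˣ) → (V → ℤˣ) → (V → ℤˣ))
    (hselCon : ∀ X Z, (edgeCost G (sel X Z) X : ℝ)
        ≤ 2 * p * (Fintype.card V) + 2 * Real.log (2/δ))
    (hselMin : ∀ X Z, ∀ Y' : V → ℤˣ,
        ((edgeCost G Y' X : ℝ) ≤ 2 * p * (Fintype.card V) + 2 * Real.log (2/δ)) →
          (Finset.univ.filter (fun v => sel X Z v ≠ Z v)).card
            ≤ (Finset.univ.filter (fun v => Y' v ≠ Z v)).card) :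
    1 - δ ≤ ∑ f : Sym2 V → Bool, ∑ g : V → Bool,
        ewt p f * vwt q g *
          (if ((Finset.univ.filter
                (fun v => sel (Xof Y f) (Zof Y g) v ≠ Y v)).card : ℝ)
              ≤ (1/ε^2) * (2 * p * (Fintype.card V) + 2 * Real.log (2/δ) + 1)
                  * Real.log (2 * Real.exp 1 / (p * δ))
            then 1 else 0) := by
  have hconn : G.Connected := hT.isConnected
  set nn := ((Fintype.card V : ℕ) : ℝ) with hnn
  set B := 2 * p * nn + 2 * Real.log (2/δ) with hB
  set M := Real.log (2 * Real.exp 1 / (p * δ)) with hM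
  set T := 1/ε^2 * (B + 1) * M with hT2
  set L2 := -Real.log (2*p) with hL2
  set m := G.edgeFinset.card with hm2
  -- basic facts
  have hp1 : p ≤ 1 := by linarith
  have h2p1 : 2*p ≤ 1 := by linarith
  have hq2 : q ≤ 1 - q := by rw [hq]; linarith
  have h1q0 : 0 ≤ 1 - q := le_trans hq0 hq2
  have hδ2pos : (0:ℝ) < 2/δ := by positivity
  have hlogδ : 0 ≤ Real.log (2/δ) := Real.log_nonneg (by rw [le_div_iff₀ hδ]; linarith)
  have hnn0 : 0 ≤ nn := by rw [hnn]; positivity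
  have hB0 : 0 ≤ B := by
    rw [hB]; have h : 0 ≤ 2*p*nn := by positivity
    linarith
  have he2 : (2:ℝ) ≤ Real.exp 1 := by have := Real.add_one_le_exp 1; linarith
  have he3 : Real.exp 1 ≤ 3 := by
    have := Real.exp_one_lt_d9; norm_num at this; linarith
  have hM0 : 0 ≤ M := by
    rw [hM]; apply Real.log_nonneg
    rw [le_div_iff₀ (by positivity)]
    nlinarith
  have hT0 : 0 ≤ T := by
    rw [hT2]
    exact mul_nonneg (mul_nonneg (by positivity) (by linarith)) hM0
  have hL20 : 0 ≤ L2 := by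
    rw [hL2]
    exact neg_nonneg.mpr (Real.log_nonpos (by linarith) h2p1)
  have hcardE : m + 1 = Fintype.card V := hT.card_edgeFinset
  have hmn : (m:ℝ) ≤ nn := by
    rw [hnn]
    exact_mod_cast Nat.le_of_succ_le (by omega)
  have hm0R : (0:ℝ) ≤ (m:ℝ) := Nat.cast_nonneg _
  have h2pm : 2*p*(m:ℝ) ≤ B := by rw [hB]; nlinarith
  clear_value nn B M T L2 m
  -- weights
  have hewt_nn : ∀ f : Sym2 V → Bool, 0 ≤ ewt p f := by
    intro f; apply Finset.prod_nonneg; intro e _; split <;> linarith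
  have hvwt_nn : ∀ g : V → Bool, 0 ≤ vwt q g := by
    intro g; apply Finset.prod_nonneg; intro v _; split <;> linarith
  have hewt_sum : ∑ f : Sym2 V → Bool, ewt p f = 1 := by
    unfold ewt
    rw [sum_prod_bool (fun (_ : Sym2 V) b => if b then p else 1 - p)]
    simp
  have hvwt_sum : ∑ g : V → Bool, vwt q g = 1 := by
    unfold vwt
    rw [sum_prod_bool (fun (_ : V) b => if b then q else 1 - q)]
    simp
  -- edge cost of the truth
  have hcostY : ∀ f : Sym2 V → Bool,
      edgeCost G Y (Xof Y f) = (G.edgeFinset.filter (fun e => f e)).card := by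
    intro f; unfold edgeCost; congr 1
    apply Finset.filter_congr
    intro e _
    by_cases hfe : f e
    · simp [Xof, hfe, units_ne_neg_one_mul (edgeLabel Y e)]
    · simp [Xof, hfe]
  -- indicator definitions
  set dd : (V → ℤˣ) → ℕ :=
    fun Y' => (Finset.univ.filter (fun v => Y' v ≠ Y v)).card with hdd
  set chi : (Sym2 V → Bool) → (V → ℤˣ) → ℝ := fun f Y' =>
    if (edgeCost G Y' (Xof Y f) : ℝ) ≤ B ∧ T < (dd Y' : ℝ) then 1 else 0 with hchi
  set rho : (V → Bool) → (V → ℤˣ) → ℝ := fun g Y' =>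
    if dd Y' ≤ 2 * (Finset.univ.filter (fun v => Y' v ≠ Y v ∧ g v)).card then 1 else 0
    with hrho
  set Af : (Sym2 V → Bool) → ℝ := fun f =>
    if B < ((G.edgeFinset.filter (fun e => f e)).card : ℝ) then 1 else 0 with hAf
  have hchi_nn : ∀ f Y', 0 ≤ chi f Y' := by
    intro f Y'; rw [hchi]; dsimp only; split <;> norm_num
  have hrho_nn : ∀ g Y', 0 ≤ rho g Y' := by
    intro g Y'; rw [hrho]; dsimp only; split <;> norm_num
  have hAf_nn : ∀ f, 0 ≤ Af f := by
    intro f; rw [hAf]; dsimp only; split <;> norm_num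
  clear_value dd chi rho Af
  -- Hoeffding-type bound for the vertex noise
  have hq1q : 0 ≤ q * (1-q) := mul_nonneg hq0 h1q0
  have hgsum : ∀ Y' : V → ℤˣ, (∑ g : V → Bool, vwt q g * rho g Y')
      ≤ (2 * Real.sqrt (q*(1-q))) ^ (dd Y') := by
    intro Y'
    set s := Real.sqrt (q*(1-q)) with hsdef
    have hs0 : 0 ≤ s := Real.sqrt_nonneg _
    set Φ : V → Bool → ℝ :=
      fun v b => if Y' v ≠ Y v then s else (if b then q else 1 - q) with hΦ
    have hΦnn : ∀ v b, 0 ≤ Φ v b := by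
      intro v b; rw [hΦ]; dsimp only; split
      · exact hs0
      · split <;> linarith
    have hpt : ∀ g : V → Bool, vwt q g * rho g Y' ≤ ∏ v : V, Φ v (g v) := by
      intro g
      by_cases hr : dd Y' ≤ 2 * (Finset.univ.filter (fun v => Y' v ≠ Y v ∧ g v)).card
      · have hone : rho g Y' = 1 := by rw [hrho]; dsimp only; rw [if_pos hr]
        rw [hone, mul_one]
        unfold vwt
        rw [← Finset.prod_filter_mul_prod_filter_not Finset.univ (fun v => Y' v ≠ Y v)
            (fun v => if g v then q else 1 - q),
          ← Finset.prod_filter_mul_prod_filter_not Finset.univ (fun v => Y' v ≠ Y v)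
            (fun v => Φ v (g v))]
        have hsecond : ∏ v ∈ Finset.univ.filter (fun v => ¬ Y' v ≠ Y v), Φ v (g v)
            = ∏ v ∈ Finset.univ.filter (fun v => ¬ Y' v ≠ Y v),
                (if g v then q else 1 - q) := by
          refine Finset.prod_congr rfl fun v hv => ?_
          rw [hΦ]; dsimp only
          rw [if_neg (Finset.mem_filter.mp hv).2]
        rw [hsecond]
        apply mul_le_mul_of_nonneg_right ?_
          (Finset.prod_nonneg fun v _ => by split <;> linarith)
        have hfirst : ∏ v ∈ Finset.univ.filter (fun v => Y' v ≠ Y v), Φ v (g v)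
            = s ^ (dd Y') := by
          have : ∀ v ∈ Finset.univ.filter (fun v => Y' v ≠ Y v), Φ v (g v) = s := by
            intro v hv; rw [hΦ]; dsimp only; rw [if_pos (Finset.mem_filter.mp hv).2]
          rw [Finset.prod_congr rfl this, Finset.prod_const]
          simp only [hdd]
        rw [hfirst]
        -- split the left product over g
        set S := Finset.univ.filter (fun v => Y' v ≠ Y v) with hS
        set k := (S.filter (fun v => g v = true)).card with hk
        have hsplitg : ∏ v ∈ S, (if g v then q else 1 - q)
            = q ^ k * (1 - q) ^ (dd Y' - k) := by
          rw [← Finset.prod_filter_mul_prod_filter_not S (fun v => g v = true)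
              (fun v => if g v then q else 1 - q)]
          have hq1 : ∏ v ∈ S.filter (fun v => g v = true), (if g v then q else 1 - q)
              = q ^ k := by
            rw [Finset.prod_congr rfl (fun v hv => by
              rw [if_pos]; exact (Finset.mem_filter.mp hv).2), Finset.prod_const, hk]
          have hq2' : ∏ v ∈ S.filter (fun v => ¬ g v = true), (if g v then q else 1 - q)
              = (1 - q) ^ (dd Y' - k) := by
            rw [Finset.prod_congr rfl (fun v hv => by
              rw [if_neg]; exact (Finset.mem_filter.mp hv).2), Finset.prod_const]
            congr 1
            have := Finset.card_filter_add_card_filter_not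
              (s := S) (p := fun v => g v = true)
            have hScard : S.card = dd Y' := by rw [hS, hdd]
            omega
          rw [hq1, hq2']
        rw [hsplitg]
        have hkflips : k = (Finset.univ.filter (fun v => Y' v ≠ Y v ∧ g v)).card := by
          rw [hk, hS, Finset.filter_filter]
        have hkd : k ≤ dd Y' := by
          rw [hk, hdd]
          exact Finset.card_le_card (by rw [hS]; exact Finset.filter_subset _ _)
        exact pow_q_le hq0 hq2 hkd (by omega)
      · have hzero : rho g Y' = 0 := by rw [hrho]; dsimp only; rw [if_neg hr]
        rw [hzero, mul_zero]
        exact Finset.prod_nonneg fun v _ => hΦnn v (g v)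
    calc ∑ g : V → Bool, vwt q g * rho g Y'
        ≤ ∑ g : V → Bool, ∏ v, Φ v (g v) := Finset.sum_le_sum fun g _ => hpt g
      _ = ∏ v, (Φ v true + Φ v false) := sum_prod_bool Φ
      _ = (2*s) ^ (dd Y') := by
          have h1 : ∀ v, Φ v true + Φ v false = if Y' v ≠ Y v then 2*s else 1 := by
            intro v; rw [hΦ]; dsimp only; by_cases hv : Y' v ≠ Y v
            · rw [if_pos hv, if_pos hv, if_pos hv]; ring
            · rw [if_neg hv, if_neg hv, if_neg hv]; norm_num
          rw [Finset.prod_congr rfl fun v _ => h1 v, ← Finset.prod_filter,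
            Finset.prod_const]
          simp only [hdd]
  -- single-deviation exponential bound
  have hExp : 2 * Real.sqrt (q*(1-q)) ≤ Real.exp (-(2*ε^2)) := by
    have h1 : (2 * Real.sqrt (q*(1-q)))^2 = 4*(q*(1-q)) := by
      rw [mul_pow, Real.sq_sqrt hq1q]; ring
    have h2 : 4*(q*(1-q)) = 1 - 4*ε^2 := by rw [hq]; ring
    have h3 : 1 - 4*ε^2 ≤ Real.exp (-(4*ε^2)) := by
      have := Real.add_one_le_exp (-(4*ε^2)); linarith
    have h4 : Real.exp (-(4*ε^2)) = Real.exp (-(2*ε^2)) * Real.exp (-(2*ε^2)) := by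
      rw [← Real.exp_add]; congr 1; ring
    nlinarith [Real.sqrt_nonneg (q*(1-q)), Real.exp_pos (-(2*ε^2))]
  have hgsum2 : ∀ (f : Sym2 V → Bool) (Y' : V → ℤˣ),
      chi f Y' * (∑ g : V → Bool, vwt q g * rho g Y')
        ≤ chi f Y' * Real.exp (-(2*ε^2)*T) := by
    intro f Y'
    by_cases hc : (edgeCost G Y' (Xof Y f) : ℝ) ≤ B ∧ T < (dd Y' : ℝ)
    · have h1 : chi f Y' = 1 := by rw [hchi]; dsimp only; rw [if_pos hc]
      rw [h1, one_mul, one_mul]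
      calc ∑ g : V → Bool, vwt q g * rho g Y'
          ≤ (2*Real.sqrt (q*(1-q))) ^ (dd Y') := hgsum Y'
        _ ≤ Real.exp (-(2*ε^2)) ^ (dd Y') := pow_le_pow_left₀ (by positivity) hExp _
        _ = Real.exp ((dd Y' : ℝ) * (-(2*ε^2))) := (Real.exp_nat_mul _ _).symm
        _ ≤ Real.exp (-(2*ε^2)*T) := by
            apply Real.exp_le_exp.mpr
            have hTd : T ≤ (dd Y' : ℝ) := le_of_lt hc.2
            have hee : 0 ≤ 2*ε^2 := by positivity
            nlinarith
    · have h1 : chi f Y' = 0 := by rw [hchi]; dsimp only; rw [if_neg hc]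
      rw [h1, zero_mul, zero_mul]
  -- cardinality bound
  have hchisum : ∀ f : Sym2 V → Bool,
      (∑ Y' : V → ℤˣ, chi f Y') ≤ Real.exp (B*L2) * (2 * (1+2*p)^m) := by
    intro f
    have hpt : ∀ Y' : V → ℤˣ,
        chi f Y' ≤ Real.exp (B*L2) * (2*p) ^ (edgeCost G Y' (Xof Y f)) := by
      intro Y'
      by_cases hc : (edgeCost G Y' (Xof Y f) : ℝ) ≤ B ∧ T < (dd Y' : ℝ)
      · have h1 : chi f Y' = 1 := by rw [hchi]; dsimp only; rw [if_pos hc]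
        rw [h1]
        have h2 : ((2*p) : ℝ) ^ (edgeCost G Y' (Xof Y f))
            = Real.exp ((edgeCost G Y' (Xof Y f) : ℝ) * Real.log (2*p)) := by
          rw [Real.exp_nat_mul, Real.exp_log (by linarith)]
        rw [h2, ← Real.exp_add]
        have hlog2p : Real.log (2*p) = -L2 := by rw [hL2, neg_neg]
        have h3 : (0:ℝ) ≤ B * L2 + (edgeCost G Y' (Xof Y f) : ℝ) * Real.log (2*p) := by
          rw [hlog2p]
          nlinarith [hc.1, hL20]
        calc (1:ℝ) = Real.exp 0 := Real.exp_zero.symm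
          _ ≤ _ := Real.exp_le_exp.mpr h3
      · have h1 : chi f Y' = 0 := by rw [hchi]; dsimp only; rw [if_neg hc]
        rw [h1]; positivity
    calc ∑ Y' : V → ℤˣ, chi f Y'
        ≤ ∑ Y' : V → ℤˣ, Real.exp (B*L2) * (2*p) ^ (edgeCost G Y' (Xof Y f)) :=
          Finset.sum_le_sum fun Y' _ => hpt Y'
      _ = Real.exp (B*L2) * ∑ Y' : V → ℤˣ, (2*p) ^ (edgeCost G Y' (Xof Y f)) := by
          rw [Finset.mul_sum]
      _ ≤ Real.exp (B*L2) * (2 * (1+2*p)^m) := by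
          apply mul_le_mul_of_nonneg_left ?_ (Real.exp_pos _).le
          have h := count_lemma G hconn (Xof Y f) (2*p) (by linarith)
          rw [hm2]
          exact h
  -- the deviation mass is small
  have hC : Real.exp (-(2*ε^2)*T) * (Real.exp (B*L2) * (2 * (1+2*p)^m)) ≤ δ/2 := by
    have hpow : ((1+2*p):ℝ)^m ≤ Real.exp (2*p*(m:ℝ)) := by
      calc ((1+2*p):ℝ)^m ≤ (Real.exp (2*p))^m := by
            apply pow_le_pow_left₀ (by linarith)
            have := Real.add_one_le_exp (2*p); linarith
        _ = Real.exp ((m:ℝ)*(2*p)) := (Real.exp_nat_mul _ _).symm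
        _ = Real.exp (2*p*(m:ℝ)) := by congr 1; ring
    have hεne : ε ≠ 0 := ne_of_gt hε
    have h2eT : 2*ε^2*T = 2*(B+1)*M := by
      rw [hT2]; field_simp
    have hL2M : L2 + 1 ≤ M := by
      have h1 : L2 + 1 = Real.log (Real.exp 1 / (2*p)) := by
        rw [Real.log_div (Real.exp_ne_zero 1) (by positivity), Real.log_exp, hL2]; ring
      rw [h1, hM]
      apply Real.log_le_log (by positivity)
      rw [div_le_div_iff₀ (by positivity) (by positivity)]
      nlinarith [Real.exp_pos 1, mul_pos (Real.exp_pos 1) hp0]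
    have h2M : Real.log (4/δ) ≤ 2*M := by
      have h1 : 2*M = Real.log ((2*Real.exp 1/(p*δ))^2) := by
        rw [hM, Real.log_pow]; push_cast; ring
      rw [h1]
      apply Real.log_le_log (by positivity)
      rw [div_pow, div_le_div_iff₀ hδ (by positivity)]
      have hpδ : 0 < p*δ := mul_pos hp0 hδ
      have k0 : p*δ ≤ δ := mul_le_of_le_one_left hδ.le hp1
      have hpδ1 : p*δ ≤ 1 := le_trans k0 hδ1
      have k1 : (p*δ)^2 ≤ p*δ := by rw [sq]; exact mul_le_of_le_one_left hpδ.le hpδ1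
      have k2 : (4:ℝ) ≤ (2*Real.exp 1)^2 := by nlinarith [he2]
      have k3 : 0 ≤ ((2*Real.exp 1)^2 - 4) * δ :=
        mul_nonneg (by linarith) hδ.le
      calc 4 * (p*δ)^2 ≤ 4 * δ := by linarith
        _ ≤ (2*Real.exp 1)^2 * δ := by linarith [k3]
    have hX : -(2*ε^2)*T + (B*L2 + 2*p*(m:ℝ)) ≤ Real.log (δ/4) := by
      have hlog4 : Real.log (δ/4) = -Real.log (4/δ) := by
        rw [Real.log_div (ne_of_gt hδ) (by norm_num),
          Real.log_div (by norm_num) (ne_of_gt hδ)]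
        ring
      have hBL : B*(L2+1) ≤ B*M := mul_le_mul_of_nonneg_left hL2M hB0
      have hBM : 0 ≤ B*M := mul_nonneg hB0 hM0
      have hneg : -(2*ε^2)*T = -(2*(B+1)*M) := by rw [← h2eT]; ring
      rw [hlog4, hneg]
      linarith
    calc Real.exp (-(2*ε^2)*T) * (Real.exp (B*L2) * (2 * (1+2*p)^m))
        ≤ Real.exp (-(2*ε^2)*T) * (Real.exp (B*L2) * (2 * Real.exp (2*p*(m:ℝ)))) := by
          have e1 := Real.exp_pos (-(2*ε^2)*T)
          have e2 := Real.exp_pos (B*L2)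
          apply mul_le_mul_of_nonneg_left ?_ e1.le
          apply mul_le_mul_of_nonneg_left ?_ e2.le
          linarith [hpow]
      _ = 2 * Real.exp (-(2*ε^2)*T + (B*L2 + 2*p*(m:ℝ))) := by
          rw [Real.exp_add, Real.exp_add]; ring
      _ ≤ 2 * Real.exp (Real.log (δ/4)) := by
          have := Real.exp_le_exp.mpr hX; linarith
      _ = 2 * (δ/4) := by rw [Real.exp_log (by positivity)]
      _ = δ/2 := by ring
  -- Chernoff bound for the edge noise
  have hT1 : ∑ f : Sym2 V → Bool, ewt p f * Af f ≤ δ/2 := by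
    set Ψ : Sym2 V → Bool → ℝ := fun e b =>
      (if b then p else 1-p) * (if e ∈ G.edgeFinset ∧ b = true then Real.exp 1 else 1)
      with hΨ
    have hΨnn : ∀ e b, 0 ≤ Ψ e b := by
      intro e b; rw [hΨ]; dsimp only
      apply mul_nonneg
      · split <;> linarith
      · split
        · positivity
        · norm_num
    have hpt : ∀ f : Sym2 V → Bool,
        ewt p f * Af f ≤ Real.exp (-B) * ∏ e : Sym2 V, Ψ e (f e) := by
      intro f
      by_cases hA : B < ((G.edgeFinset.filter (fun e => f e)).card : ℝ)
      · have h1 : Af f = 1 := by rw [hAf]; dsimp only; rw [if_pos hA]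
        rw [h1, mul_one]
        have hsplit : ∏ e : Sym2 V, Ψ e (f e)
            = ewt p f * ∏ e : Sym2 V,
                (if e ∈ G.edgeFinset ∧ f e = true then Real.exp 1 else 1) := by
          rw [hΨ]; dsimp only
          unfold ewt
          rw [Finset.prod_mul_distrib]
        have hcard : ∏ e : Sym2 V, (if e ∈ G.edgeFinset ∧ f e = true then Real.exp 1 else 1)
            = Real.exp 1 ^ ((G.edgeFinset.filter (fun e => f e)).card) := by
          rw [← Finset.prod_filter, Finset.prod_const]
          congr 2
          ext e; simp [Finset.mem_filter]
        have hexp1 : Real.exp 1 ^ ((G.edgeFinset.filter (fun e => f e)).card)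
            = Real.exp (((G.edgeFinset.filter (fun e => f e)).card : ℝ)) := by
          rw [← Real.exp_nat_mul, mul_one]
        have h2 : (1:ℝ) ≤ Real.exp (-B)
            * Real.exp (((G.edgeFinset.filter (fun e => f e)).card : ℝ)) := by
          rw [← Real.exp_add]
          calc (1:ℝ) = Real.exp 0 := Real.exp_zero.symm
            _ ≤ _ := Real.exp_le_exp.mpr (by linarith)
        rw [hsplit, hcard, hexp1]
        calc ewt p f = ewt p f * 1 := (mul_one _).symm
          _ ≤ ewt p f * (Real.exp (-B)
              * Real.exp (((G.edgeFinset.filter (fun e => f e)).card : ℝ))) :=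
            mul_le_mul_of_nonneg_left h2 (hewt_nn f)
          _ = Real.exp (-B) * (ewt p f
              * Real.exp (((G.edgeFinset.filter (fun e => f e)).card : ℝ))) := by ring
      · have h1 : Af f = 0 := by rw [hAf]; dsimp only; rw [if_neg hA]
        rw [h1, mul_zero]
        exact mul_nonneg (Real.exp_pos _).le (Finset.prod_nonneg fun e _ => hΨnn e _)
    calc ∑ f : Sym2 V → Bool, ewt p f * Af f
        ≤ ∑ f : Sym2 V → Bool, Real.exp (-B) * ∏ e : Sym2 V, Ψ e (f e) :=
          Finset.sum_le_sum fun f _ => hpt f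
      _ = Real.exp (-B) * ∑ f : Sym2 V → Bool, ∏ e : Sym2 V, Ψ e (f e) := by
          rw [Finset.mul_sum]
      _ = Real.exp (-B) * ∏ e : Sym2 V, (Ψ e true + Ψ e false) := by
          rw [sum_prod_bool]
      _ = Real.exp (-B) * ∏ e : Sym2 V,
            (if e ∈ G.edgeFinset then (1 - p + p * Real.exp 1) else 1) := by
          congr 1
          refine Finset.prod_congr rfl fun e _ => ?_
          rw [hΨ]; dsimp only
          by_cases he : e ∈ G.edgeFinset
          · simp only [he, true_and, and_false, if_true, if_false]
            norm_num; ring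
          · simp only [he, false_and, if_neg, if_false]
            norm_num
      _ = Real.exp (-B) * (1 - p + p * Real.exp 1) ^ m := by
          rw [← Finset.prod_filter, Finset.filter_univ_mem, Finset.prod_const, hm2]
      _ ≤ Real.exp (-B) * Real.exp (p*(Real.exp 1 - 1)*(m:ℝ)) := by
          apply mul_le_mul_of_nonneg_left ?_ (Real.exp_pos _).le
          calc (1 - p + p * Real.exp 1) ^ m ≤ (Real.exp (p*(Real.exp 1 - 1)))^m := by
                apply pow_le_pow_left₀
                · nlinarith [Real.exp_pos 1]
                · have := Real.add_one_le_exp (p*(Real.exp 1 - 1)); nlinarith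
            _ = Real.exp (p*(Real.exp 1 - 1)*(m:ℝ)) := by
                rw [← Real.exp_nat_mul]; congr 1; ring
      _ = Real.exp (-B + p*(Real.exp 1 - 1)*(m:ℝ)) := (Real.exp_add _ _).symm
      _ ≤ Real.exp (-Real.log (2/δ)) := by
          apply Real.exp_le_exp.mpr
          have hm1 : p*(Real.exp 1 - 1)*(m:ℝ) ≤ 2*p*nn := by
            have hpe : p*(Real.exp 1 - 1) ≤ 2*p := by
              have := mul_nonneg hp0.le (by linarith [he3] : (0:ℝ) ≤ 3 - Real.exp 1)
              nlinarith
            calc p*(Real.exp 1 - 1)*(m:ℝ) ≤ (2*p)*(m:ℝ) :=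
                  mul_le_mul_of_nonneg_right hpe hm0R
              _ ≤ (2*p)*nn := mul_le_mul_of_nonneg_left hmn (by linarith)
              _ = 2*p*nn := by ring
          rw [hB]; linarith
      _ = δ/2 := by rw [Real.exp_neg, Real.exp_log hδ2pos, inv_div]
  -- pointwise union bound
  have hpoint : ∀ (f : Sym2 V → Bool) (g : V → Bool),
      1 - (if (((Finset.univ.filter
            (fun v => sel (Xof Y f) (Zof Y g) v ≠ Y v)).card : ℝ)) ≤ T
          then (1:ℝ) else 0)
        ≤ Af f + ∑ Y' : V → ℤˣ, chi f Y' * rho g Y' := by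
    intro f g
    have hsum_nn : 0 ≤ ∑ Y' : V → ℤˣ, chi f Y' * rho g Y' :=
      Finset.sum_nonneg fun Y' _ => mul_nonneg (hchi_nn f Y') (hrho_nn g Y')
    by_cases hbad : (((Finset.univ.filter
        (fun v => sel (Xof Y f) (Zof Y g) v ≠ Y v)).card : ℝ)) ≤ T
    · rw [if_pos hbad]
      have := hAf_nn f; linarith
    · rw [if_neg hbad]
      by_cases hA : B < ((G.edgeFinset.filter (fun e => f e)).card : ℝ)
      · have h1 : Af f = 1 := by rw [hAf]; dsimp only; rw [if_pos hA]
        rw [h1]; linarith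
      · push_neg at hA
        set W := sel (Xof Y f) (Zof Y g) with hWdef
        have hYconF : (edgeCost G Y (Xof Y f) : ℝ) ≤ B := by rw [hcostY f]; exact hA
        have hmin := hselMin (Xof Y f) (Zof Y g) Y hYconF
        rw [← hWdef] at hmin
        set S := Finset.univ.filter (fun v => W v ≠ Y v) with hS
        set Gf := Finset.univ.filter (fun v => g v = true) with hGf
        have claim1 : Finset.univ.filter (fun v => Y v ≠ Zof Y g v) = Gf := by
          rw [hGf]
          ext v
          simp only [Finset.mem_filter, Finset.mem_univ, true_and, Zof]
          by_cases hgv : g v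
          · simp [hgv, units_ne_neg_one_mul (Y v)]
          · simp [hgv]
        have claim2 : Finset.univ.filter (fun v => W v ≠ Zof Y g v)
            = (S \ Gf) ∪ (Gf \ S) := by
          ext v
          simp only [Finset.mem_filter, Finset.mem_univ, true_and, Zof,
            Finset.mem_union, Finset.mem_sdiff, hS, hGf]
          by_cases hgv : g v
          · by_cases hWv : W v = Y v
            · simp [hgv, hWv, units_ne_neg_one_mul (Y v)]
            · simp [hgv, hWv, neg_one_mul, units_ne_neg_iff]
          · by_cases hWv : W v = Y v
            · simp [hgv, hWv]
            · simp [hgv, hWv]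
        have hminc : ((S \ Gf) ∪ (Gf \ S)).card ≤ Gf.card := by
          rw [claim2, claim1] at hmin; exact hmin
        have e1 := Finset.card_inter_add_card_sdiff S Gf
        have e2 := Finset.card_inter_add_card_sdiff Gf S
        have e3 : (S ∩ Gf).card = (Gf ∩ S).card := by rw [Finset.inter_comm]
        have e4 : ((S \ Gf) ∪ (Gf \ S)).card = (S \ Gf).card + (Gf \ S).card :=
          Finset.card_union_of_disjoint disjoint_sdiff_sdiff
        have hflips : Finset.univ.filter (fun v => W v ≠ Y v ∧ g v) = S ∩ Gf := by
          rw [hS, hGf]; exact Finset.filter_and _ _ _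
        have hkey : dd W ≤ 2 * (Finset.univ.filter (fun v => W v ≠ Y v ∧ g v)).card := by
          have hdds : dd W = S.card := by rw [hdd, hS]
          rw [hdds, hflips]
          omega
        have hTdd : T < (dd W : ℝ) := by
          apply lt_of_not_ge
          intro h
          apply hbad
          rw [hdd] at h
          exact h
        have hchiW : chi f W = 1 := by
          rw [hchi]; dsimp only
          rw [if_pos ⟨by rw [hWdef]; exact hselCon (Xof Y f) (Zof Y g), hTdd⟩]
        have hrhoW : rho g W = 1 := by rw [hrho]; dsimp only; rw [if_pos hkey]
        have hone : (1:ℝ) ≤ ∑ Y' : V → ℤˣ, chi f Y' * rho g Y' := by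
          have hs := Finset.single_le_sum (f := fun Y' => chi f Y' * rho g Y')
            (fun Y' _ => mul_nonneg (hchi_nn f Y') (hrho_nn g Y')) (Finset.mem_univ W)
          rw [hchiW, hrhoW, mul_one] at hs
          exact hs
        have hAf0 : Af f = 0 := by
          rw [hAf]; dsimp only; rw [if_neg (not_lt.mpr hA)]
        rw [hAf0]; linarith
  -- assemble
  refine prob_reduce (ewt p) (vwt q) _ δ hewt_sum hvwt_sum ?_
  have hperf : ∀ f : Sym2 V → Bool,
      ∑ g : V → Bool, vwt q g *
          (1 - (if (((Finset.univ.filter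
              (fun v => sel (Xof Y f) (Zof Y g) v ≠ Y v)).card : ℝ)) ≤ T
            then (1:ℝ) else 0))
        ≤ Af f + Real.exp (-(2*ε^2)*T) * (Real.exp (B*L2) * (2 * (1+2*p)^m)) := by
    intro f
    have hsplit : ∑ g : V → Bool, vwt q g *
        (Af f + ∑ Y' : V → ℤˣ, chi f Y' * rho g Y')
        = Af f * (∑ g : V → Bool, vwt q g)
          + ∑ Y' : V → ℤˣ, chi f Y' * (∑ g : V → Bool, vwt q g * rho g Y') := by
      have h1 : ∀ g : V → Bool, vwt q g * (Af f + ∑ Y' : V → ℤˣ, chi f Y' * rho g Y')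
          = vwt q g * Af f + ∑ Y' : V → ℤˣ, chi f Y' * (vwt q g * rho g Y') := by
        intro g
        rw [mul_add]
        congr 1
        rw [Finset.mul_sum]
        exact Finset.sum_congr rfl fun Y' _ => by ring
      rw [Finset.sum_congr rfl fun g _ => h1 g, Finset.sum_add_distrib]
      congr 1
      · rw [← Finset.sum_mul, mul_comm]
      · rw [Finset.sum_comm]
        exact Finset.sum_congr rfl fun Y' _ => (Finset.mul_sum _ _ _).symm
    calc ∑ g : V → Bool, vwt q g *
          (1 - (if (((Finset.univ.filter
              (fun v => sel (Xof Y f) (Zof Y g) v ≠ Y v)).card : ℝ)) ≤ T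
            then (1:ℝ) else 0))
        ≤ ∑ g : V → Bool, vwt q g * (Af f + ∑ Y' : V → ℤˣ, chi f Y' * rho g Y') :=
          Finset.sum_le_sum fun g _ =>
            mul_le_mul_of_nonneg_left (hpoint f g) (hvwt_nn g)
      _ = Af f * (∑ g : V → Bool, vwt q g)
          + ∑ Y' : V → ℤˣ, chi f Y' * (∑ g : V → Bool, vwt q g * rho g Y') := hsplit
      _ = Af f + ∑ Y' : V → ℤˣ, chi f Y' * (∑ g : V → Bool, vwt q g * rho g Y') := by
          rw [hvwt_sum, mul_one]
      _ ≤ Af f + ∑ Y' : V → ℤˣ, chi f Y' * Real.exp (-(2*ε^2)*T) := by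
          have := Finset.sum_le_sum fun Y' (_ : Y' ∈ (Finset.univ : Finset (V → ℤˣ)))
            => hgsum2 f Y'
          linarith
      _ = Af f + (∑ Y' : V → ℤˣ, chi f Y') * Real.exp (-(2*ε^2)*T) := by
          rw [Finset.sum_mul]
      _ ≤ Af f + (Real.exp (B*L2) * (2 * (1+2*p)^m)) * Real.exp (-(2*ε^2)*T) := by
          have := mul_le_mul_of_nonneg_right (hchisum f)
            (Real.exp_pos (-(2*ε^2)*T)).le
          linarith
      _ = Af f + Real.exp (-(2*ε^2)*T) * (Real.exp (B*L2) * (2 * (1+2*p)^m)) := by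
          ring
  calc ∑ f : Sym2 V → Bool, ∑ g : V → Bool, ewt p f * vwt q g *
        (1 - (if (((Finset.univ.filter
            (fun v => sel (Xof Y f) (Zof Y g) v ≠ Y v)).card : ℝ)) ≤ T
          then (1:ℝ) else 0))
      ≤ ∑ f : Sym2 V → Bool, (ewt p f * Af f
          + ewt p f * (Real.exp (-(2*ε^2)*T) * (Real.exp (B*L2) * (2 * (1+2*p)^m)))) := by
        apply Finset.sum_le_sum
        intro f _
        have hstep1 : ∑ g : V → Bool, ewt p f * vwt q g *
            (1 - (if (((Finset.univ.filter
                (fun v => sel (Xof Y f) (Zof Y g) v ≠ Y v)).card : ℝ)) ≤ T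
              then (1:ℝ) else 0))
            = ewt p f * ∑ g : V → Bool, vwt q g *
            (1 - (if (((Finset.univ.filter
                (fun v => sel (Xof Y f) (Zof Y g) v ≠ Y v)).card : ℝ)) ≤ T
              then (1:ℝ) else 0)) := by
          rw [Finset.mul_sum]
          exact Finset.sum_congr rfl fun g _ => by ring
        rw [hstep1, ← mul_add]
        exact mul_le_mul_of_nonneg_left (hperf f) (hewt_nn f)
    _ = (∑ f : Sym2 V → Bool, ewt p f * Af f)
        + (∑ f : Sym2 V → Bool, ewt p f)
          * (Real.exp (-(2*ε^2)*T) * (Real.exp (B*L2) * (2 * (1+2*p)^m))) := by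
        rw [Finset.sum_add_distrib, ← Finset.sum_mul]
    _ ≤ δ := by
        rw [hewt_sum, one_mul]
        linarith
end
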